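/- Let V be a standard value-function candidate and let y ∈ (−p/α,∞). Define G_y : [−p/α,∞) → ℝ by G_y(x) = V(x) for x ≤ y and G_y(x) = V(y) + (x − y) for x > y. If G_y is a viscosity super-solution of the HJB equation on (y, ∞), then G_y(x) = V(x) for all x ∈ [−p/α, ∞). -/

import Mathlib

open MeasureTheory Set Filter

noncomputable section

/-- Drift coefficient: c(x) = p + r x for x ≥ 0, c(x) = p + α x for x < 0. -/
def drift (p r a x : ℝ) : ℝ := if 0 ≤ x then p + r * x else p + a * x

/-- I_v(x) = ∫_{(0, x+p/α]} v(x−u) dμ(u). -/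
def Iop (p a : ℝ) (mu : Measure ℝ) (v : ℝ → ℝ) (x : ℝ) : ℝ :=
  ∫ u in Set.Ioc (0 : ℝ) (x + p / a), v (x - u) ∂mu

/-- L_{v,φ}(x) = c(x)·φ′(x) − (λ+δ)·v(x) + λ·I_v(x). -/
def Lphi (p lam d r a : ℝ) (mu : Measure ℝ) (v phi : ℝ → ℝ) (x : ℝ) : ℝ :=
  drift p r a x * deriv phi x - (lam + d) * v x + lam * Iop p a mu v x

/-- G_v(x) = c(x) − (λ+δ)·v(x) + λ·I_v(x). -/
def Gop (p lam d r a : ℝ) (mu : Measure ℝ) (v : ℝ → ℝ) (x : ℝ) : ℝ :=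
  drift p r a x - (lam + d) * v x + lam * Iop p a mu v x

/-- Viscosity sub-solution of the HJB equation on J ⊆ (−p/α,∞). -/
def IsViscSubsol (p lam d r a : ℝ) (mu : Measure ℝ) (u : ℝ → ℝ) (J : Set ℝ) : Prop :=
  ∀ x ∈ J, ∀ phi : ℝ → ℝ, ContDiff ℝ 1 phi → phi x = u x →
    (∀ y ∈ Set.Ici (-(p / a)), u y - phi y ≤ u x - phi x) →
    0 ≤ max (1 - deriv phi x) (Lphi p lam d r a mu u phi x)

/-- Viscosity super-solution of the HJB equation on J ⊆ (−p/α,∞). -/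
def IsViscSupersol (p lam d r a : ℝ) (mu : Measure ℝ) (u : ℝ → ℝ) (J : Set ℝ) : Prop :=
  ∀ x ∈ J, ∀ phi : ℝ → ℝ, ContDiff ℝ 1 phi → phi x = u x →
    (∀ y ∈ Set.Ici (-(p / a)), u x - phi x ≤ u y - phi y) →
    max (1 - deriv phi x) (Lphi p lam d r a mu u phi x) ≤ 0

/-- Viscosity solution: both sub- and super-solution. -/
def IsViscSol (p lam d r a : ℝ) (mu : Measure ℝ) (u : ℝ → ℝ) (J : Set ℝ) : Prop :=
  IsViscSubsol p lam d r a mu u J ∧ IsViscSupersol p lam d r a mu u J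

/-- Locally Lipschitz on a set. -/
def LocLipOn (s : Set ℝ) (u : ℝ → ℝ) : Prop :=
  ∀ x ∈ s, ∃ K : NNReal, ∃ eps : ℝ, 0 < eps ∧ LipschitzOnWith K u (s ∩ Metric.ball x eps)

/-- Linear growth bound on [−p/α,∞). -/
def LinGrowth (p a : ℝ) (u : ℝ → ℝ) : Prop :=
  ∃ c₁ c₂ : ℝ, ∀ x : ℝ, -(p / a) ≤ x → u x ≤ c₁ * x + c₂

/-- Standard value-function candidate. -/
structure IsCandidate (p lam d r a : ℝ) (mu : Measure ℝ) (V : ℝ → ℝ) : Prop where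
  cont : ContinuousOn V (Set.Ici (-(p / a)))
  nonneg : ∀ x ∈ Set.Ici (-(p / a)), 0 ≤ V x
  mono : MonotoneOn V (Set.Ici (-(p / a)))
  boundary : V (-(p / a)) = 0
  slope : ∀ x y : ℝ, -(p / a) ≤ x → x ≤ y → y - x ≤ V y - V x
  growth : ∀ x : ℝ, 0 ≤ x → V x ≤ (d * x + p) / (d - r) + p / a
  locLip : LocLipOn (Set.Ioi (-(p / a))) V
  visc : IsViscSol p lam d r a mu V (Set.Ioi (-(p / a)))
  derivLim : ∀ x ∈ Set.Ioi (-(p / a)), ∀ (h : ℕ → ℝ) (dd : ℝ),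
      ((∀ n, 0 < h n) ∨ (∀ n, h n < 0)) →
      Filter.Tendsto h Filter.atTop (nhds 0) →
      Filter.Tendsto (fun n => (V (x + h n) - V x) / h n) Filter.atTop (nhds dd) →
      1 ≤ dd ∧ dd * drift p r a x - (lam + d) * V x + lam * Iop p a mu V x ≤ 0

/-- The set A = {x ∈ [−p/α,∞) : G_V(x) = 0}. -/
def setA (p lam d r a : ℝ) (mu : Measure ℝ) (V : ℝ → ℝ) : Set ℝ :=
  {x | x ∈ Set.Ici (-(p / a)) ∧ Gop p lam d r a mu V x = 0}

/-- The set B = {x ∈ [−p/α,∞) : V′(x) exists, V′(x) = 1 and G_V(x) < 0}. -/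
def setB (p lam d r a : ℝ) (mu : Measure ℝ) (V : ℝ → ℝ) : Set ℝ :=
  {x | x ∈ Set.Ici (-(p / a)) ∧ DifferentiableAt ℝ V x ∧ deriv V x = 1 ∧
      Gop p lam d r a mu V x < 0}

/-- The set C = [−p/α,∞) \ (A ∪ B). -/
def setC (p lam d r a : ℝ) (mu : Measure ℝ) (V : ℝ → ℝ) : Set ℝ :=
  Set.Ici (-(p / a)) \ (setA p lam d r a mu V ∪ setB p lam d r a mu V)

namespace Stmt19Aux

/-- Comparison weight `exp((s/2)·log(1+(z+M)²))`, i.e. `(1+(z+M)²)^(s/2)`. -/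
def eAux (s M z : ℝ) : ℝ := Real.exp (s / 2 * Real.log (1 + (z + M) ^ 2))

lemma eAux_pos (s M z : ℝ) : 0 < eAux s M z := Real.exp_pos _

lemma eAux_hasDerivAt (s M z : ℝ) :
    HasDerivAt (eAux s M) (eAux s M z * (s * (z + M) / (1 + (z + M) ^ 2))) z := by
  have hA : (0:ℝ) < 1 + (z + M) ^ 2 := by positivity
  have h1 : HasDerivAt (fun w : ℝ => 1 + (w + M) ^ 2) (2 * (z + M)) z := by
    have := (((hasDerivAt_id z).add_const M).pow 2).const_add (1 : ℝ)
    simpa using this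
  have h2 := (h1.log hA.ne').const_mul (s / 2)
  have h3 := h2.exp
  have hfe : eAux s M = fun w => Real.exp (s / 2 * Real.log (1 + (w + M) ^ 2)) := rfl
  rw [hfe]
  convert h3 using 1
  show Real.exp (s / 2 * Real.log (1 + (z + M) ^ 2)) * _ = _
  field_simp

lemma eAux_contDiff (s M : ℝ) : ContDiff ℝ 1 (eAux s M) := by
  have h1 : ContDiff ℝ 1 (fun w : ℝ => 1 + (w + M) ^ 2) := by
    exact contDiff_const.add ((contDiff_id.add contDiff_const).pow 2)
  have h2 : ContDiff ℝ 1 (fun w : ℝ => Real.log (1 + (w + M) ^ 2)) := by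
    rw [contDiff_iff_contDiffAt]
    intro x
    exact (h1.contDiffAt).log (by positivity)
  exact Real.contDiff_exp.comp (contDiff_const.mul h2)

lemma eAux_mono (s M : ℝ) (hs : 0 ≤ s) {z w : ℝ} (hz : 0 ≤ z + M) (hzw : z ≤ w) :
    eAux s M z ≤ eAux s M w := by
  apply Real.exp_le_exp.2
  apply mul_le_mul_of_nonneg_left _ (by linarith : (0:ℝ) ≤ s / 2)
  apply Real.log_le_log (by positivity)
  nlinarith

end Stmt19Aux
namespace Stmt19Aux

set_option maxHeartbeats 1000000 in
lemma key
    (p lam d r a : ℝ) (hp : 0 < p) (hlam : 0 < lam) (hd : 0 < d)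
    (hr : 0 < r) (hra : r < a) (hrd : r < d)
    (mu : Measure ℝ) [IsProbabilityMeasure mu]
    (V : ℝ → ℝ) (hV : IsCandidate p lam d r a mu V)
    (y : ℝ) (hy : -(p / a) < y)
    (hsuper : IsViscSupersol p lam d r a mu
      (fun x => if x ≤ y then V x else V y + (x - y)) (Set.Ioi y))
    (x₀ : ℝ) (hx₀y : y < x₀) (hx₀ : 0 < V x₀ - (V y + (x₀ - y))) : False := by
  have ha : 0 < a := lt_trans hr hra
  have hdr' : 0 < d - r := by linarith
  set s : ℝ := (1 + d / r) / 2 with hs_def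
  clear_value s
  have hs1 : 1 < s := by
    have : 1 < d / r := (one_lt_div hr).2 hrd
    rw [hs_def]; linarith
  have hs0 : 0 < s := by linarith
  have hsr : s * r < d := by
    have hsr' : s * r = (r + d) / 2 := by rw [hs_def]; field_simp
    rw [hsr']; linarith
  set M : ℝ := p / r + 1 + |y| with hM_def
  clear_value M
  have habs : -|y| ≤ y := neg_abs_le y
  have habs' : 0 ≤ |y| := abs_nonneg y
  have hpr : 0 < p / r := by positivity
  have hyM : 0 < y + M := by rw [hM_def]; linarith
  have hM1 : 1 < M := by rw [hM_def]; linarith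
  have hrM : p ≤ r * M := by
    have : r * M = p + r * (1 + |y|) := by rw [hM_def]; field_simp; ring
    nlinarith
  have hdrift : ∀ z, y ≤ z → drift p r a z ≤ r * (z + M) := by
    intro z hz
    unfold drift
    split_ifs with h0
    · nlinarith
    · push_neg at h0
      have h1 : a * z ≤ 0 := mul_nonpos_of_nonneg_of_nonpos ha.le h0.le
      have h2 : r * (y + M) ≤ r * (z + M) := by nlinarith
      have h3 : r * (y + M) = r * y + p + r + r * |y| := by rw [hM_def]; field_simp; ring
      nlinarith
  have hEpos : ∀ z, 0 < eAux s M z := fun z => eAux_pos s M z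
  set q : ℝ → ℝ := fun z => (V z - (V y + (z - y))) / eAux s M z with hq_def
  clear_value q
  have hqy : q y = 0 := by simp [hq_def]
  have hε : 0 < q x₀ := by rw [hq_def]; exact div_pos hx₀ (hEpos x₀)
  set ε := q x₀ with hε_def
  clear_value ε
  set K₀ : ℝ := p / (d - r) + p / a + y - V y with hK₀
  clear_value K₀
  set C : ℝ := r / (d - r) + |K₀| + 1 with hC
  clear_value C
  have hCpos : 0 < C := by
    have := abs_nonneg K₀
    have : 0 < r / (d - r) := by positivity
    rw [hC]; positivity
  have h2C : 0 < 2 * C / ε := by positivity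
  set R : ℝ := Real.exp (max 0 (Real.log (2 * C / ε)) / (s - 1)) with hR
  clear_value R
  have hRpos : 0 < R := by rw [hR]; exact Real.exp_pos _
  -- linear bound on the excess for z ≥ 0
  have hlin : ∀ z, 0 ≤ z → V z - (V y + (z - y)) ≤ C * (z + M) := by
    intro z hz
    have hg := hV.growth z hz
    have hexp : (d * z + p) / (d - r) + p / a - V y - (z - y) = (r / (d - r)) * z + K₀ := by
      rw [hK₀]; field_simp; ring
    have h1 : V z - (V y + (z - y)) ≤ (r / (d - r)) * z + K₀ := by
      linarith only [hg, hexp]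
    have hrdr : 0 ≤ r / (d - r) := by positivity
    have h2 : (r / (d - r)) * z ≤ (r / (d - r)) * (z + M) :=
      mul_le_mul_of_nonneg_left (by linarith only [hM1]) hrdr
    have h5 := abs_nonneg K₀
    have h3 : K₀ ≤ |K₀| * (z + M) := by
      have h4 := le_abs_self K₀
      have h6 : |K₀| * 1 ≤ |K₀| * (z + M) :=
        mul_le_mul_of_nonneg_left (by linarith only [hz, hM1]) h5
      linarith only [h4, h6]
    have h6 : 0 ≤ z + M := by linarith only [hz, hM1]
    rw [hC]
    have h7 : (r / (d - r)) * (z + M) + |K₀| * (z + M) + 1 * (z + M)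
        = (r / (d - r) + |K₀| + 1) * (z + M) := by ring
    linarith only [h1, h2, h3, h6, h7]
  -- tail bound
  have htail : ∀ z, 0 ≤ z → R ≤ z + M → q z ≤ ε / 2 := by
    intro z hz hzR
    rw [hq_def]
    show (V z - (V y + (z - y))) / eAux s M z ≤ ε / 2
    rw [div_le_iff₀ (hEpos z)]
    have hw0 : 0 < z + M := lt_of_lt_of_le hRpos hzR
    have hw1 : 1 ≤ z + M := by linarith only [hz, hM1]
    have hElow : Real.exp (s * Real.log (z + M)) ≤ eAux s M z := by
      show _ ≤ Real.exp (s / 2 * Real.log (1 + (z + M) ^ 2))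
      apply Real.exp_le_exp.2
      have hlog : Real.log ((z + M) ^ 2) = 2 * Real.log (z + M) := by
        rw [Real.log_pow]; push_cast; ring
      have h2 : Real.log ((z + M) ^ 2) ≤ Real.log (1 + (z + M) ^ 2) :=
        Real.log_le_log (by positivity) (by linarith only [])
      rw [hlog] at h2
      have h9 := mul_le_mul_of_nonneg_left h2 (by linarith only [hs0] : (0:ℝ) ≤ s / 2)
      calc s * Real.log (z + M) = s / 2 * (2 * Real.log (z + M)) := by ring
        _ ≤ s / 2 * Real.log (1 + (z + M) ^ 2) := h9
    have hsplit : Real.exp (s * Real.log (z + M))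
        = (z + M) * Real.exp ((s - 1) * Real.log (z + M)) := by
      have h1 : s * Real.log (z + M) = Real.log (z + M) + (s - 1) * Real.log (z + M) := by ring
      rw [h1, Real.exp_add, Real.exp_log hw0]
    have hlogw : Real.log R ≤ Real.log (z + M) := Real.log_le_log hRpos hzR
    have hlogR : Real.log R = max 0 (Real.log (2 * C / ε)) / (s - 1) := by
      rw [hR]; exact Real.log_exp _
    have hface : 2 * C / ε ≤ Real.exp ((s - 1) * Real.log (z + M)) := by
      have hs1' : (0:ℝ) < s - 1 := by linarith only [hs1]
      have h1 : (s - 1) * Real.log R = max 0 (Real.log (2 * C / ε)) := by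
        rw [hlogR]; field_simp
      have h2 : Real.log (2 * C / ε) ≤ (s - 1) * Real.log (z + M) := by
        have h3 := mul_le_mul_of_nonneg_left hlogw hs1'.le
        have h4 := le_max_right 0 (Real.log (2 * C / ε))
        linarith only [h1, h3, h4]
      calc 2 * C / ε = Real.exp (Real.log (2 * C / ε)) := (Real.exp_log h2C).symm
        _ ≤ _ := Real.exp_le_exp.2 h2
    have hCw : V z - (V y + (z - y)) ≤ C * (z + M) := hlin z hz
    have hEz : (z + M) * (2 * C / ε) ≤ eAux s M z := by
      calc (z + M) * (2 * C / ε) ≤ (z + M) * Real.exp ((s - 1) * Real.log (z + M)) :=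
            mul_le_mul_of_nonneg_left hface hw0.le
        _ = Real.exp (s * Real.log (z + M)) := hsplit.symm
        _ ≤ _ := hElow
    have hCeq : C * (z + M) = ε / 2 * ((z + M) * (2 * C / ε)) := by field_simp
    have h10 := mul_le_mul_of_nonneg_left hEz (by linarith only [hε] : (0:ℝ) ≤ ε / 2)
    linarith only [hCw, hCeq, h10]
  -- maximum point
  set T : ℝ := max x₀ (max 0 (R - M)) with hT
  clear_value T
  have hx₀T : x₀ ≤ T := by rw [hT]; exact le_max_left _ _
  have hyT : y ≤ T := le_trans hx₀y.le hx₀T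
  have hqc : ContinuousOn q (Icc y T) := by
    rw [hq_def]
    apply ContinuousOn.div
    · apply ContinuousOn.sub
      · exact hV.cont.mono (fun z hz => le_trans hy.le hz.1)
      · exact (continuous_const.add (continuous_id.sub continuous_const)).continuousOn
    · exact (eAux_contDiff s M).continuous.continuousOn
    · intro z _; exact (hEpos z).ne'
  obtain ⟨xs, hxsmem, hxsmax⟩ :=
    isCompact_Icc.exists_isMaxOn ⟨x₀, hx₀y.le, hx₀T⟩ hqc
  have hεxs : ε ≤ q xs := by rw [hε_def]; exact hxsmax ⟨hx₀y.le, hx₀T⟩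
  have hqmax : ∀ z, y ≤ z → q z ≤ q xs := by
    intro z hz
    by_cases hzT : z ≤ T
    · exact hxsmax ⟨hz, hzT⟩
    · push_neg at hzT
      have h1 : (0:ℝ) ≤ T := by
        rw [hT]; exact le_trans (le_max_left 0 (R - M)) (le_max_right x₀ _)
      have h2 : R - M ≤ T := by
        rw [hT]; exact le_trans (le_max_right 0 (R - M)) (le_max_right x₀ _)
      have h3 := htail z (by linarith only [h1, hzT]) (by linarith only [h2, hzT])
      linarith only [h3, hε, hεxs]
  have hgs : 0 < q xs := lt_of_lt_of_le hε hεxs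
  have hyxs : y < xs := by
    rcases lt_or_eq_of_le hxsmem.1 with h | h
    · exact h
    · exfalso; rw [← h, hqy] at hgs; exact lt_irrefl 0 hgs
  have hxsm : -(p / a) < xs := lt_trans hy hyxs
  have hhxs : V xs - (V y + (xs - y)) = q xs * eAux s M xs := by
    rw [hq_def]
    show _ = (V xs - (V y + (xs - y))) / eAux s M xs * eAux s M xs
    exact (div_mul_cancel₀ _ (hEpos xs).ne').symm
  have hhxs_pos : 0 < V xs - (V y + (xs - y)) := by
    rw [hhxs]; exact mul_pos hgs (hEpos xs)
  -- test function for subsolution property of V at xs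
  set gs : ℝ := q xs with hgs_def
  clear_value gs
  set φ : ℝ → ℝ := fun z => V y + (z - y) + gs * eAux s M z with hφ_def
  clear_value φ
  have hφc : ContDiff ℝ 1 φ := by
    rw [hφ_def]
    apply ContDiff.add
    · exact contDiff_const.add (contDiff_id.sub contDiff_const)
    · exact contDiff_const.mul (eAux_contDiff s M)
  have hφxs : φ xs = V xs := by
    rw [hφ_def]
    show V y + (xs - y) + gs * eAux s M xs = V xs
    linarith only [hhxs]
  set D : ℝ := eAux s M xs * (s * (xs + M) / (1 + (xs + M) ^ 2)) with hD_def
  clear_value D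
  have hxsM : 0 < xs + M := by linarith only [hyM, hyxs]
  have hDpos : 0 < D := by
    rw [hD_def]
    have := hEpos xs
    have hA : (0:ℝ) < 1 + (xs + M) ^ 2 := by positivity
    positivity
  have hφd : HasDerivAt φ (1 + gs * D) xs := by
    rw [hφ_def, hD_def]
    have h1 : HasDerivAt (fun z : ℝ => V y + (z - y)) 1 xs :=
      ((hasDerivAt_id xs).sub_const y).const_add (V y)
    have h2 := (eAux_hasDerivAt s M xs).const_mul gs
    exact h1.add h2
  have hφderiv : deriv φ xs = 1 + gs * D := hφd.deriv
  have hmaxcond : ∀ z ∈ Ici (-(p / a)), V z - φ z ≤ V xs - φ xs := by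
    intro z hz
    rw [hφxs, sub_self, hφ_def]
    show V z - (V y + (z - y) + gs * eAux s M z) ≤ 0
    by_cases hzy : z ≤ y
    · have hsl := hV.slope z y hz hzy
      have h11 := mul_pos hgs (hEpos z)
      linarith only [hsl, h11]
    · push_neg at hzy
      have h1 : q z ≤ gs := hqmax z hzy.le
      have h2 : V z - (V y + (z - y)) = q z * eAux s M z := by
        rw [hq_def]
        show _ = (V z - (V y + (z - y))) / eAux s M z * eAux s M z
        exact (div_mul_cancel₀ _ (hEpos z).ne').symm
      have h3 : q z * eAux s M z ≤ gs * eAux s M z :=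
        mul_le_mul_of_nonneg_right h1 (hEpos z).le
      linarith only [h2, h3]
  have hsub := hV.visc.1 xs hxsm φ hφc hφxs hmaxcond
  have hLV : 0 ≤ drift p r a xs * (1 + gs * D) - (lam + d) * V xs + lam * Iop p a mu V xs := by
    have h1 : ¬ (0 ≤ 1 - deriv φ xs) := by
      rw [hφderiv]; push_neg
      linarith only [mul_pos hgs hDpos]
    have h2 := (le_max_iff.mp hsub).resolve_left h1
    rw [Lphi, hφderiv] at h2
    exact h2
  -- test function for supersolution property of Gf at xs
  set Gf : ℝ → ℝ := fun x => if x ≤ y then V x else V y + (x - y) with hGf_def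
  clear_value Gf
  have hVy0 : 0 ≤ V y := hV.nonneg y hy.le
  have hxy2 : 0 < (xs - y) ^ 2 := pow_pos (sub_pos.2 hyxs) 2
  set k : ℝ := V y / (xs - y) ^ 2 with hk_def
  clear_value k
  have hk0 : 0 ≤ k := by rw [hk_def]; exact div_nonneg hVy0 hxy2.le
  have hkxy : k * (xs - y) ^ 2 = V y := by
    rw [hk_def]; exact div_mul_cancel₀ _ hxy2.ne'
  set φ₂ : ℝ → ℝ := fun z => V y + (z - y) - k * (z - xs) ^ 2 with hφ₂_def
  clear_value φ₂
  have hφ₂c : ContDiff ℝ 1 φ₂ := by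
    rw [hφ₂_def]
    apply ContDiff.sub
    · exact contDiff_const.add (contDiff_id.sub contDiff_const)
    · exact contDiff_const.mul ((contDiff_id.sub contDiff_const).pow 2)
  have hGfxs : Gf xs = V y + (xs - y) := by
    rw [hGf_def]
    simp only []
    rw [if_neg (not_le.2 hyxs)]
  have hφ₂xs : φ₂ xs = Gf xs := by
    rw [hφ₂_def, hGfxs]
    show V y + (xs - y) - k * (xs - xs) ^ 2 = _
    ring
  have hφ₂d : HasDerivAt φ₂ 1 xs := by
    rw [hφ₂_def]
    have h1 : HasDerivAt (fun z : ℝ => V y + (z - y)) 1 xs :=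
      ((hasDerivAt_id xs).sub_const y).const_add (V y)
    have h2 := (((hasDerivAt_id xs).sub_const xs).pow 2).const_mul k
    have h3 := h1.sub h2
    exact h3.congr_deriv (by simp)
  have hmincond : ∀ z ∈ Ici (-(p / a)), Gf xs - φ₂ xs ≤ Gf z - φ₂ z := by
    intro z hz
    rw [hφ₂xs, sub_self, hGf_def, hφ₂_def]
    show (0:ℝ) ≤ (if z ≤ y then V z else V y + (z - y)) - (V y + (z - y) - k * (z - xs) ^ 2)
    by_cases hzy : z ≤ y
    · rw [if_pos hzy]
      have hs1 := hV.slope z y hz hzy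
      have hVz := hV.nonneg z hz
      have hsq : (xs - y) ^ 2 ≤ (z - xs) ^ 2 := by
        have hprod : 0 ≤ (y - z) * (2 * xs - y - z) :=
          mul_nonneg (by linarith only [hzy]) (by linarith only [hzy, hyxs])
        nlinarith only [hprod]
      have h5 := mul_le_mul_of_nonneg_left hsq hk0
      linarith only [hVz, h5, hkxy, hs1, hzy]
    · rw [if_neg hzy]
      linarith only [mul_nonneg hk0 (sq_nonneg (z - xs))]
  have hsup := hsuper xs (mem_Ioi.2 hyxs) φ₂ hφ₂c hφ₂xs hmincond
  have hLG : drift p r a xs - (lam + d) * (V y + (xs - y)) + lam * Iop p a mu Gf xs ≤ 0 := by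
    have h2 : Lphi p lam d r a mu Gf φ₂ xs ≤ 0 := le_trans (le_max_right _ _) hsup
    rw [Lphi, hφ₂d.deriv, hGfxs] at h2
    linarith only [h2]
  -- integral comparison
  have hxpa : 0 < xs + p / a := by linarith only [hxsm]
  have hGcont : ContinuousOn Gf (Ici (-(p / a))) := by
    have heq : EqOn Gf (fun z => min (V z) (V y + (z - y))) (Ici (-(p / a))) := by
      intro z hz
      rw [hGf_def]
      show (if z ≤ y then V z else V y + (z - y)) = min (V z) (V y + (z - y))
      by_cases hzy : z ≤ y
      · rw [if_pos hzy, min_eq_left]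
        linarith [hV.slope z y hz hzy]
      · push_neg at hzy
        rw [if_neg (not_le.2 hzy), min_eq_right]
        linarith only [hV.slope y z hy.le hzy.le]
    have hlin2 : ContinuousOn (fun z : ℝ => V y + (z - y)) (Ici (-(p / a))) :=
      (continuous_const.add (continuous_id.sub continuous_const)).continuousOn
    have hmin : ContinuousOn (fun z => min (V z) (V y + (z - y))) (Ici (-(p / a))) :=
      fun x hx => (hV.cont x hx).min (hlin2 x hx)
    exact hmin.congr heq
  have hmapsTo : ∀ u ∈ Icc (0:ℝ) (xs + p / a), xs - u ∈ Ici (-(p / a)) := by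
    intro u hu
    simp only [mem_Ici]
    linarith only [hu.2]
  have hcomp : Continuous (fun u : ℝ => xs - u) := continuous_const.sub continuous_id
  have intV : IntegrableOn (fun u => V (xs - u)) (Ioc 0 (xs + p / a)) mu := by
    have h1 : ContinuousOn (fun u => V (xs - u)) (Icc 0 (xs + p / a)) :=
      hV.cont.comp hcomp.continuousOn hmapsTo
    exact (h1.integrableOn_compact isCompact_Icc).mono_set Ioc_subset_Icc_self
  have intG : IntegrableOn (fun u => Gf (xs - u)) (Ioc 0 (xs + p / a)) mu := by
    have h1 : ContinuousOn (fun u => Gf (xs - u)) (Icc 0 (xs + p / a)) :=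
      hGcont.comp hcomp.continuousOn hmapsTo
    exact (h1.integrableOn_compact isCompact_Icc).mono_set Ioc_subset_Icc_self
  have hIdiff : Iop p a mu V xs - Iop p a mu Gf xs ≤ V xs - (V y + (xs - y)) := by
    rw [Iop, Iop, ← integral_sub intV intG]
    have hbound : ∀ u ∈ Ioc (0:ℝ) (xs + p / a),
        V (xs - u) - Gf (xs - u) ≤ V xs - (V y + (xs - y)) := by
      intro u hu
      have hz1 : -(p / a) ≤ xs - u := by linarith only [hu.2]
      by_cases hzy : xs - u ≤ y
      · have : Gf (xs - u) = V (xs - u) := by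
          rw [hGf_def]
          show (if xs - u ≤ y then V (xs - u) else V y + ((xs - u) - y)) = _
          rw [if_pos hzy]
        rw [this, sub_self]
        linarith only [hhxs_pos]
      · push_neg at hzy
        have hGz : Gf (xs - u) = V y + ((xs - u) - y) := by
          rw [hGf_def]
          show (if xs - u ≤ y then V (xs - u) else V y + ((xs - u) - y)) = _
          rw [if_neg (not_le.2 hzy)]
        rw [hGz]
        have h1 : q (xs - u) ≤ gs := hqmax (xs - u) hzy.le
        have h2 : V (xs - u) - (V y + ((xs - u) - y)) = q (xs - u) * eAux s M (xs - u) := by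
          rw [hq_def]
          show _ = (V (xs - u) - (V y + ((xs - u) - y))) / eAux s M (xs - u) * eAux s M (xs - u)
          exact (div_mul_cancel₀ _ (hEpos (xs - u)).ne').symm
        have h3 : eAux s M (xs - u) ≤ eAux s M xs :=
          eAux_mono s M hs0.le (by linarith only [hzy, hyM] : 0 ≤ (xs - u) + M)
            (by linarith only [hu.1])
        calc V (xs - u) - (V y + ((xs - u) - y)) = q (xs - u) * eAux s M (xs - u) := h2
          _ ≤ gs * eAux s M (xs - u) := mul_le_mul_of_nonneg_right h1 (hEpos _).le
          _ ≤ gs * eAux s M xs := mul_le_mul_of_nonneg_left h3 hgs.le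
          _ = V xs - (V y + (xs - y)) := hhxs.symm
    have hconst : IntegrableOn (fun _ : ℝ => V xs - (V y + (xs - y))) (Ioc 0 (xs + p / a)) mu := by
      exact integrableOn_const (measure_lt_top _ _).ne
    calc (∫ u in Ioc 0 (xs + p / a), (V (xs - u) - Gf (xs - u)) ∂mu)
        ≤ ∫ _u in Ioc 0 (xs + p / a), (V xs - (V y + (xs - y))) ∂mu :=
          setIntegral_mono_on (intV.sub intG) hconst measurableSet_Ioc hbound
      _ = (mu (Ioc 0 (xs + p / a))).toReal * (V xs - (V y + (xs - y))) := by
          rw [setIntegral_const, smul_eq_mul, measureReal_def]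
      _ ≤ 1 * (V xs - (V y + (xs - y))) := by
          apply mul_le_mul_of_nonneg_right _ hhxs_pos.le
          have h8 : (mu (Ioc 0 (xs + p / a))).toReal ≤ (1 : ENNReal).toReal :=
            ENNReal.toReal_mono (by simp) prob_le_one
          simpa using h8
      _ = V xs - (V y + (xs - y)) := one_mul _
  -- key strict bound
  have hkey : drift p r a xs * D < d * eAux s M xs := by
    have hA : (0:ℝ) < 1 + (xs + M) ^ 2 := by positivity
    have hdle := hdrift xs hyxs.le
    have hρ0 : 0 ≤ s * (xs + M) / (1 + (xs + M) ^ 2) := by positivity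
    have h1 : drift p r a xs * D ≤ (r * (xs + M)) * (eAux s M xs * (s * (xs + M) / (1 + (xs + M) ^ 2))) := by
      rw [hD_def]
      apply mul_le_mul_of_nonneg_right hdle
      exact mul_nonneg (hEpos xs).le hρ0
    have hfrac : (xs + M) ^ 2 / (1 + (xs + M) ^ 2) ≤ 1 := by
      rw [div_le_one hA]; linarith only []
    have h2 : (r * (xs + M)) * (s * (xs + M) / (1 + (xs + M) ^ 2))
        = (s * r) * ((xs + M) ^ 2 / (1 + (xs + M) ^ 2)) := by ring
    have h3 : (r * (xs + M)) * (s * (xs + M) / (1 + (xs + M) ^ 2)) ≤ s * r := by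
      rw [h2]
      have h31 := mul_le_mul_of_nonneg_left hfrac (mul_nonneg hs0.le hr.le)
      linarith only [h31]
    have h4 : drift p r a xs * D ≤ (s * r) * eAux s M xs := by
      calc drift p r a xs * D
          ≤ (r * (xs + M)) * (eAux s M xs * (s * (xs + M) / (1 + (xs + M) ^ 2))) := h1
        _ = ((r * (xs + M)) * (s * (xs + M) / (1 + (xs + M) ^ 2))) * eAux s M xs := by ring
        _ ≤ (s * r) * eAux s M xs := mul_le_mul_of_nonneg_right h3 (hEpos xs).le
    have h5 : (s * r) * eAux s M xs < d * eAux s M xs :=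
      mul_lt_mul_of_pos_right hsr (hEpos xs)
    linarith only [h4, h5]
  -- final contradiction
  have hfin1 : lam * (Iop p a mu V xs - Iop p a mu Gf xs)
      ≤ lam * (V xs - (V y + (xs - y))) := mul_le_mul_of_nonneg_left hIdiff hlam.le
  have hfin2 : gs * (drift p r a xs * D) < gs * (d * eAux s M xs) :=
    mul_lt_mul_of_pos_left hkey hgs
  have e2 : d * (V xs - (V y + (xs - y))) = d * (gs * eAux s M xs) := by rw [hhxs]
  linarith only [hLV, hLG, hfin1, hfin2, e2]

end Stmt19Aux
theorem stmt19
    (p lam d r a : ℝ) (hp : 0 < p) (hlam : 0 < lam) (hd : 0 < d)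
    (hr : 0 < r) (hra : r < a) (hrd : r < d)
    (mu : Measure ℝ) [IsProbabilityMeasure mu] (hmu : mu (Set.Iic 0) = 0)
    (V : ℝ → ℝ) (hV : IsCandidate p lam d r a mu V)
    (y : ℝ) (hy : -(p / a) < y)
    (hsuper : IsViscSupersol p lam d r a mu
      (fun x => if x ≤ y then V x else V y + (x - y)) (Set.Ioi y)) :
    ∀ x : ℝ, -(p / a) ≤ x →
      (if x ≤ y then V x else V y + (x - y)) = V x := by
  intro x hx
  split_ifs with hxy
  · rfl
  · push_neg at hxy
    by_contra hne
    have hge : x - y ≤ V x - V y := hV.slope y x hy.le hxy.le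
    have hpos : 0 < V x - (V y + (x - y)) := by
      rcases lt_or_eq_of_le (by linarith : V y + (x - y) ≤ V x) with h | h
      · linarith
      · exact absurd h hne
    exact Stmt19Aux.key p lam d r a hp hlam hd hr hra hrd mu V hV y hy hsuper x hxy hpos
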